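/- In the degree-0/1 WLPR setting with n ≥ 2, suppose that for every j₀ = 1,…,n−1 one has (∑_{l=j₀}^{n−1} w_{2l+1}) / (∑_{l=j₀}^{n−1} w_{2l}) < ‖w¹‖₁/‖w⁰‖₁, and for every j₁ = 1,…,n−2 one has ‖w¹‖₁/‖w⁰‖₁ < (∑_{l=j₁}^{n−1} w_{2l+1}) / (∑_{l=j₁+1}^{n−1} w_{2l}). Then all coefficients of the difference mask q of S_{1,w^λ} are positive: q_{2j} > 0 and q_{2j+1} > 0 for all j = 1−n,…,n−1. -/

import Mathlib

/-- `‖w⁰‖₁ = 1 + 2 ∑_{l=1}^{n−1} w_{2l}`. -/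
noncomputable def normW0 (n : ℕ) (w : ℕ → ℝ) : ℝ :=
  1 + 2 * ∑ l ∈ Finset.Icc 1 (n - 1), w (2 * l)

/-- `‖w¹‖₁ = 2 ∑_{l=0}^{n−1} w_{2l+1}`. -/
noncomputable def normW1 (n : ℕ) (w : ℕ → ℝ) : ℝ :=
  2 * ∑ l ∈ Finset.Icc 0 (n - 1), w (2 * l + 1)

/-- The even difference coefficients of `S_{1,w^λ}`:
`q_{2j} = ∑_{l=1−n}^{j} (w_{2|l|}/‖w⁰‖₁ − w_{|2l−1|}/‖w¹‖₁)`. -/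
noncomputable def qEven (n : ℕ) (w : ℕ → ℝ) (j : ℤ) : ℝ :=
  ∑ l ∈ Finset.Icc (1 - (n : ℤ)) j,
    (w ((2 * l).natAbs) / normW0 n w - w ((2 * l - 1).natAbs) / normW1 n w)

/-- The odd difference coefficients of `S_{1,w^λ}`:
`q_{2j+1} = ∑_{l=j}^{n−1} (w_{2|l|}/‖w⁰‖₁ − w_{|2l+1|}/‖w¹‖₁)`. -/
noncomputable def qOdd (n : ℕ) (w : ℕ → ℝ) (j : ℤ) : ℝ :=
  ∑ l ∈ Finset.Icc j ((n : ℤ) - 1),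
    (w ((2 * l).natAbs) / normW0 n w - w ((2 * l + 1).natAbs) / normW1 n w)

lemma sum_Icc_int_cast (a b : ℕ) (f : ℤ → ℝ) :
    ∑ l ∈ Finset.Icc (a : ℤ) (b : ℤ), f l = ∑ l ∈ Finset.Icc a b, f (l : ℤ) := by
  refine Finset.sum_nbij' (fun l => l.toNat) (fun l => (l : ℤ)) ?_ ?_ ?_ ?_ ?_
  · intro x hx; simp [Finset.mem_Icc] at hx ⊢; omega
  · intro x hx; simp [Finset.mem_Icc] at hx ⊢; omega
  · intro x hx; simp [Finset.mem_Icc] at hx ⊢; omega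
  · intro x hx; simp
  · intro x hx; simp [Finset.mem_Icc] at hx
    show f x = f ((x.toNat : ℤ))
    rw [Int.toNat_of_nonneg (by omega)]

lemma qEven_eq_qOdd_neg (n : ℕ) (w : ℕ → ℝ) (j : ℤ) :
    qEven n w j = qOdd n w (-j) := by
  unfold qEven qOdd
  refine Finset.sum_nbij' (fun l => -l) (fun l => -l) ?_ ?_ ?_ ?_ ?_
  · intro x hx; simp [Finset.mem_Icc] at hx ⊢; omega
  · intro x hx; simp [Finset.mem_Icc] at hx ⊢; omega
  · intro x _; ring
  · intro x _; ring
  · intro x _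
    have e1 : (2 * -x).natAbs = (2 * x).natAbs := by omega
    have e2 : (2 * -x + 1).natAbs = (2 * x - 1).natAbs := by omega
    rw [e1, e2]

lemma qOdd_pos_formula (n : ℕ) (hn : 2 ≤ n) (w : ℕ → ℝ) (m : ℕ) :
    qOdd n w (m : ℤ) =
      (∑ l ∈ Finset.Icc m (n - 1), w (2 * l)) / normW0 n w
      - (∑ l ∈ Finset.Icc m (n - 1), w (2 * l + 1)) / normW1 n w := by
  unfold qOdd
  have hcast : ((n : ℤ) - 1) = ((n - 1 : ℕ) : ℤ) := by omega
  rw [hcast, sum_Icc_int_cast, Finset.sum_sub_distrib, ← Finset.sum_div, ← Finset.sum_div]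
  have A : ∑ l ∈ Finset.Icc m (n - 1), w ((2 * (l : ℤ)).natAbs)
      = ∑ l ∈ Finset.Icc m (n - 1), w (2 * l) :=
    Finset.sum_congr rfl fun l _ => by
      have e : (2 * (l : ℤ)).natAbs = 2 * l := by omega
      rw [e]
  have B : ∑ l ∈ Finset.Icc m (n - 1), w ((2 * (l : ℤ) + 1).natAbs)
      = ∑ l ∈ Finset.Icc m (n - 1), w (2 * l + 1) :=
    Finset.sum_congr rfl fun l _ => by
      have e : (2 * (l : ℤ) + 1).natAbs = 2 * l + 1 := by omega
      rw [e]
  rw [A, B]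

lemma qOdd_neg_formula (n : ℕ) (hn : 2 ≤ n) (w : ℕ → ℝ) (hw0 : w 0 = 1)
    (hN0 : normW0 n w ≠ 0) (hN1 : normW1 n w ≠ 0) :
    ∀ m : ℕ, m ≤ n - 1 →
    qOdd n w (-(m : ℤ)) =
      (∑ l ∈ Finset.Icc m (n - 1), w (2 * l + 1)) / normW1 n w
      - (∑ l ∈ Finset.Icc (m + 1) (n - 1), w (2 * l)) / normW0 n w := by
  intro m
  induction m with
  | zero =>
    intro _
    have h0 : qOdd n w (-(0 : ℕ) : ℤ) = qOdd n w ((0 : ℕ) : ℤ) := by norm_num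
    rw [h0, qOdd_pos_formula n hn w 0]
    have hsplit : Finset.Icc 0 (n - 1) = insert 0 (Finset.Icc 1 (n - 1)) := by
      ext x; simp [Finset.mem_Icc]; omega
    have hA : ∑ l ∈ Finset.Icc 0 (n - 1), w (2 * l)
        = 1 + ∑ l ∈ Finset.Icc 1 (n - 1), w (2 * l) := by
      rw [hsplit, Finset.sum_insert (by simp)]
      simp [hw0]
    rw [hA]
    have hsum01 : Finset.Icc (0 + 1) (n - 1) = Finset.Icc 1 (n - 1) := by norm_num
    rw [hsum01]
    set T0 := ∑ l ∈ Finset.Icc 1 (n - 1), w (2 * l) with hT0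
    set T1 := ∑ l ∈ Finset.Icc 0 (n - 1), w (2 * l + 1) with hT1
    have e0 : normW0 n w = 1 + 2 * T0 := rfl
    have e1 : normW1 n w = 2 * T1 := rfl
    rw [e0, e1]
    have h1 : (1 : ℝ) + 2 * T0 ≠ 0 := by rw [← e0]; exact hN0
    have h2 : (2 : ℝ) * T1 ≠ 0 := by rw [← e1]; exact hN1
    have h3 : T1 ≠ 0 := by intro h; apply h2; rw [h]; ring
    field_simp
    have hx : (1 + T0 * 2)⁻¹ * (1 + T0 * 2) = 1 := inv_mul_cancel₀ (by rwa [mul_comm] at h1)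
    linear_combination 2 * hx
  | succ k ih =>
    intro hk
    have hk' : k ≤ n - 1 := by omega
    have step : qOdd n w (-((k + 1 : ℕ) : ℤ))
        = (w (2 * (k + 1)) / normW0 n w - w (2 * k + 1) / normW1 n w)
          + qOdd n w (-(k : ℤ)) := by
      unfold qOdd
      have hsplit : Finset.Icc (-((k + 1 : ℕ) : ℤ)) ((n : ℤ) - 1)
          = insert (-((k + 1 : ℕ) : ℤ)) (Finset.Icc (-(k : ℤ)) ((n : ℤ) - 1)) := by
        ext x; simp [Finset.mem_Icc]; omega
      rw [hsplit, Finset.sum_insert (by intro h; simp [Finset.mem_Icc] at h)]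
      have e1 : (2 * (-((k + 1 : ℕ) : ℤ))).natAbs = 2 * (k + 1) := by omega
      have e2 : (2 * (-((k + 1 : ℕ) : ℤ)) + 1).natAbs = 2 * k + 1 := by omega
      rw [e1, e2]
    rw [step, ih hk']
    have hT1split : Finset.Icc k (n - 1) = insert k (Finset.Icc (k + 1) (n - 1)) := by
      ext x; simp [Finset.mem_Icc]; omega
    have hT0split : Finset.Icc (k + 1) (n - 1)
        = insert (k + 1) (Finset.Icc (k + 1 + 1) (n - 1)) := by
      ext x; simp [Finset.mem_Icc]; omega
    have hT1e : ∑ l ∈ Finset.Icc k (n - 1), w (2 * l + 1)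
        = w (2 * k + 1) + ∑ l ∈ Finset.Icc (k + 1) (n - 1), w (2 * l + 1) := by
      rw [hT1split, Finset.sum_insert (by simp)]
    have hT0e : ∑ l ∈ Finset.Icc (k + 1) (n - 1), w (2 * l)
        = w (2 * (k + 1)) + ∑ l ∈ Finset.Icc (k + 1 + 1) (n - 1), w (2 * l) := by
      rw [hT0split, Finset.sum_insert (by simp)]
    rw [hT1e, hT0e, add_div, add_div]
    ring

/-- in the degree-0/1 WLPR setting (`n ≥ 2`, `λ ∈ (2n−1, 2n)`, `w₀ = 1`,
`w_l > 0` for `l ≤ 2n−1`), if for every `j₀ = 1,…,n−1`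
`(∑_{l=j₀}^{n−1} w_{2l+1})/(∑_{l=j₀}^{n−1} w_{2l}) < ‖w¹‖₁/‖w⁰‖₁`
and for every `j₁ = 1,…,n−2`
`‖w¹‖₁/‖w⁰‖₁ < (∑_{l=j₁}^{n−1} w_{2l+1})/(∑_{l=j₁+1}^{n−1} w_{2l})`,
then all coefficients of the difference mask are positive:
`q_{2j} > 0` and `q_{2j+1} > 0` for all `j = 1−n,…,n−1`. -/
theorem stmt9 (n : ℕ) (hn : 2 ≤ n) (lam : ℝ)
    (hlam1 : 2 * (n : ℝ) - 1 < lam) (hlam2 : lam < 2 * n)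
    (w : ℕ → ℝ) (hw0 : w 0 = 1) (hwpos : ∀ l : ℕ, l ≤ 2 * n - 1 → 0 < w l)
    (h1 : ∀ j₀ : ℕ, 1 ≤ j₀ → j₀ ≤ n - 1 →
      (∑ l ∈ Finset.Icc j₀ (n - 1), w (2 * l + 1)) /
        (∑ l ∈ Finset.Icc j₀ (n - 1), w (2 * l)) < normW1 n w / normW0 n w)
    (h2 : ∀ j₁ : ℕ, 1 ≤ j₁ → j₁ ≤ n - 2 →
      normW1 n w / normW0 n w <
        (∑ l ∈ Finset.Icc j₁ (n - 1), w (2 * l + 1)) /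
          (∑ l ∈ Finset.Icc (j₁ + 1) (n - 1), w (2 * l))) :
    ∀ j : ℤ, 1 - (n : ℤ) ≤ j → j ≤ (n : ℤ) - 1 →
      0 < qEven n w j ∧ 0 < qOdd n w j := by
  have hN0 : 0 < normW0 n w := by
    unfold normW0
    have h : 0 ≤ ∑ l ∈ Finset.Icc 1 (n - 1), w (2 * l) :=
      Finset.sum_nonneg fun l hl => by
        have := Finset.mem_Icc.mp hl
        exact le_of_lt (hwpos (2 * l) (by omega))
    linarith
  have hN1 : 0 < normW1 n w := by
    unfold normW1
    have h : 0 < ∑ l ∈ Finset.Icc 0 (n - 1), w (2 * l + 1) :=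
      Finset.sum_pos (fun l hl => by
        have := Finset.mem_Icc.mp hl
        exact hwpos (2 * l + 1) (by omega))
        (Finset.nonempty_Icc.mpr (by omega))
    linarith
  have key : ∀ j : ℤ, 1 - (n : ℤ) ≤ j → j ≤ (n : ℤ) - 1 → 0 < qOdd n w j := by
    intro j hj1 hj2
    rcases le_or_gt 1 j with hj | hj
    · obtain ⟨m, rfl⟩ : ∃ m : ℕ, j = (m : ℤ) := ⟨j.toNat, by omega⟩
      have hm1 : 1 ≤ m := by omega
      have hm2 : m ≤ n - 1 := by omega
      rw [qOdd_pos_formula n hn w m]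
      have hA0 : 0 < ∑ l ∈ Finset.Icc m (n - 1), w (2 * l) :=
        Finset.sum_pos (fun l hl => by
          have := Finset.mem_Icc.mp hl; exact hwpos _ (by omega))
          (Finset.nonempty_Icc.mpr hm2)
      have hlt := h1 m hm1 hm2
      rw [div_lt_div_iff₀ hA0 hN0] at hlt
      rw [sub_pos, div_lt_div_iff₀ hN1 hN0]
      linarith
    · obtain ⟨m, rfl⟩ : ∃ m : ℕ, j = -(m : ℤ) := ⟨(-j).toNat, by omega⟩
      have hm : m ≤ n - 1 := by omega
      rw [qOdd_neg_formula n hn w hw0 (ne_of_gt hN0) (ne_of_gt hN1) m hm]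
      rcases Nat.eq_zero_or_pos m with rfl | hm1
      · set T1 := ∑ l ∈ Finset.Icc 0 (n - 1), w (2 * l + 1) with hT1def
        have hIcc : Finset.Icc (0 + 1) (n - 1) = Finset.Icc 1 (n - 1) := by norm_num
        rw [hIcc]
        set T0 := ∑ l ∈ Finset.Icc 1 (n - 1), w (2 * l) with hT0def
        have e0 : normW0 n w = 1 + 2 * T0 := rfl
        have e1 : normW1 n w = 2 * T1 := rfl
        have hT1pos : 0 < T1 := by
          have := hN1; rw [e1] at this; linarith
        rw [sub_pos, div_lt_div_iff₀ hN0 hN1, e0, e1]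
        nlinarith
      · rcases eq_or_lt_of_le hm with hme | hlt
        · subst hme
          have hempty : Finset.Icc (n - 1 + 1) (n - 1) = (∅ : Finset ℕ) :=
            Finset.Icc_eq_empty (by omega)
          rw [hempty, Finset.sum_empty, Finset.Icc_self, Finset.sum_singleton,
            zero_div, sub_zero]
          exact div_pos (hwpos (2 * (n - 1) + 1) (by omega)) hN1
        · have hm2 : m ≤ n - 2 := by omega
          have hT0pos : 0 < ∑ l ∈ Finset.Icc (m + 1) (n - 1), w (2 * l) :=
            Finset.sum_pos (fun l hl => by
              have := Finset.mem_Icc.mp hl; exact hwpos _ (by omega))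
              (Finset.nonempty_Icc.mpr (by omega))
          have hlt2 := h2 m hm1 hm2
          rw [div_lt_div_iff₀ hN0 hT0pos] at hlt2
          rw [sub_pos, div_lt_div_iff₀ hN0 hN1]
          linarith
  intro j hj1 hj2
  refine ⟨?_, key j hj1 hj2⟩
  rw [qEven_eq_qOdd_neg]
  exact key (-j) (by omega) (by omega)
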